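/- arXiv:1901.03658 — 3 statements merged into one kernel-verified Lean document; each statement's English description precedes it below -/
import Mathlib

section
/- For f ∈ L¹(ℝⁿ) and g ∈ L^p_{uloc}(ℝⁿ) with 1 ≤ p < ∞, the convolution f * g satisfies ‖f * g‖_{L^p_{uloc}(ℝⁿ)} ≤ ‖f‖_{L¹(ℝⁿ)} ‖g‖_{L^p_{uloc}(ℝⁿ)}. -/
open MeasureTheory Metric
open scoped ENNReal

private lemma holder_aux {α : Type*} [MeasurableSpace α] {μ : Measure α}
    {r : ℝ} (hr : 1 ≤ r) {F G : α → ℝ≥0∞} (hF : AEMeasurable F μ) (hG : AEMeasurable G μ) :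
    (∫⁻ y, F y * G y ∂μ) ^ r ≤ (∫⁻ y, F y ∂μ) ^ (r - 1) * ∫⁻ y, F y * G y ^ r ∂μ := by
  rcases eq_or_lt_of_le hr with h1 | h1
  · simp [← h1]
  · set q : ℝ := r / (r - 1) with hqdef
    have hq : q.HolderConjugate r := (Real.HolderConjugate.conjExponent h1).symm
    have hr0 : (0:ℝ) < r := lt_trans one_pos h1
    have hq0 : (0:ℝ) < q := hq.pos
    have key := ENNReal.lintegral_mul_le_Lp_mul_Lq μ hq
      (hF.pow_const (1/q)) ((hF.pow_const (1/r)).mul hG)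
    have e1 : ∀ y, ((fun y => F y ^ (1/q)) * fun y => F y ^ (1/r) * G y) y = F y * G y := by
      intro y
      simp only [Pi.mul_apply]
      have hsum : 1/q + 1/r = 1 := by rw [one_div, one_div, hq.inv_add_inv_eq_one]
      rw [← mul_assoc, ← ENNReal.rpow_add_of_nonneg _ _ (by positivity) (by positivity),
        hsum, ENNReal.rpow_one]
    have e2 : ∀ y, (F y ^ (1/q)) ^ q = F y := by
      intro y
      rw [← ENNReal.rpow_mul, one_div, inv_mul_cancel₀ (ne_of_gt hq0), ENNReal.rpow_one]
    have e3 : ∀ y, (F y ^ (1/r) * G y) ^ r = F y * G y ^ r := by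
      intro y
      rw [ENNReal.mul_rpow_of_nonneg _ _ hr0.le, ← ENNReal.rpow_mul, one_div,
        inv_mul_cancel₀ (ne_of_gt hr0), ENNReal.rpow_one]
    simp only [Pi.mul_apply] at e1 key
    simp only [e1, e2, e3] at key
    calc (∫⁻ y, F y * G y ∂μ) ^ r
        ≤ ((∫⁻ y, F y ∂μ) ^ (1/q) * (∫⁻ y, F y * G y ^ r ∂μ) ^ (1/r)) ^ r :=
          ENNReal.rpow_le_rpow key hr0.le
      _ = (∫⁻ y, F y ∂μ) ^ (r - 1) * ∫⁻ y, F y * G y ^ r ∂μ := by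
          rw [ENNReal.mul_rpow_of_nonneg _ _ hr0.le, ← ENNReal.rpow_mul, ← ENNReal.rpow_mul,
            one_div, one_div, inv_mul_cancel₀ (ne_of_gt hr0), ENNReal.rpow_one]
          have hh : q⁻¹ * r = r - 1 := by
            rw [hqdef]
            field_simp
          rw [hh]

/-- Young's inequality in uniformly local spaces:
`‖f * g‖_{L^p_uloc} ≤ ‖f‖_{L¹} ‖g‖_{L^p_uloc}` for `1 ≤ p < ∞`. -/
theorem young_uloc (n : ℕ) (hn : 0 < n) (p : ℝ≥0∞) (hp : 1 ≤ p) (hp' : p ≠ ∞)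
    (f g : EuclideanSpace ℝ (Fin n) → ℝ)
    (hf : Integrable f) (hg : AEStronglyMeasurable g volume) :
    (⨆ x₀ : EuclideanSpace ℝ (Fin n),
        eLpNorm (fun x => ∫ y, f y * g (x - y)) p (volume.restrict (ball x₀ 1))) ≤
      eLpNorm f 1 volume *
        ⨆ x₀ : EuclideanSpace ℝ (Fin n), eLpNorm g p (volume.restrict (ball x₀ 1)) := by
  set r : ℝ := p.toReal with hrdef
  have hp0 : p ≠ 0 := fun h => by simp [h] at hp
  have hr : 1 ≤ r := by
    rw [hrdef, ← ENNReal.toReal_one]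
    exact (ENNReal.toReal_le_toReal (by simp) hp').mpr hp
  have hr0 : (0:ℝ) < r := lt_of_lt_of_le one_pos hr
  set F : EuclideanSpace ℝ (Fin n) → ℝ≥0∞ := fun y => (‖f y‖₊ : ℝ≥0∞) with hFdef
  set G : EuclideanSpace ℝ (Fin n) → ℝ≥0∞ := fun x => (‖g x‖₊ : ℝ≥0∞) with hGdef
  have hFmeas : AEMeasurable F volume := hf.aestronglyMeasurable.enorm
  have hGmeas : AEMeasurable G volume := hg.enorm
  set A : ℝ≥0∞ := ∫⁻ y, F y ∂volume with hAdef
  set M : ℝ≥0∞ := ⨆ x₀ : EuclideanSpace ℝ (Fin n),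
    eLpNorm g p (volume.restrict (ball x₀ 1)) with hMdef
  have hA1 : eLpNorm f 1 volume = A := eLpNorm_one_eq_lintegral_enorm
  have hAne : A ≠ ∞ := hf.2.ne
  rw [hA1]
  refine iSup_le fun x₀ => ?_
  -- pointwise bound on convolution
  have step1 : ∀ x : EuclideanSpace ℝ (Fin n),
      (‖∫ y, f y * g (x - y)‖₊ : ℝ≥0∞) ≤ ∫⁻ y, F y * G (x - y) := by
    intro x
    refine le_trans (enorm_integral_le_lintegral_enorm _) (le_of_eq ?_)
    refine lintegral_congr fun y => ?_
    simp [hFdef, hGdef, nnnorm_mul, ENNReal.coe_mul]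
    rfl
  -- measurability of translated G
  have hGx : ∀ x : EuclideanSpace ℝ (Fin n),
      AEMeasurable (fun y => G (x - y)) volume := fun x =>
    hGmeas.comp_quasiMeasurePreserving
      (Measure.measurePreserving_sub_left volume x).quasiMeasurePreserving
  -- pointwise Hölder
  have step2 : ∀ x : EuclideanSpace ℝ (Fin n), (‖∫ y, f y * g (x - y)‖₊ : ℝ≥0∞) ^ r ≤
      A ^ (r - 1) * ∫⁻ y, F y * G (x - y) ^ r := fun x =>
    le_trans (ENNReal.rpow_le_rpow (step1 x) hr0.le)
      (holder_aux hr hFmeas (hGx x))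
  -- Fubini swap
  have hprodmeas : AEMeasurable
      (fun z : EuclideanSpace ℝ (Fin n) × EuclideanSpace ℝ (Fin n) => F z.2 * G (z.1 - z.2) ^ r)
      ((volume.restrict (ball x₀ 1)).prod volume) := by
    have hac : ((volume.restrict (ball x₀ 1)).prod (volume : Measure (EuclideanSpace ℝ (Fin n)))) ≪
        ((volume : Measure (EuclideanSpace ℝ (Fin n))).prod volume) :=
      (Measure.restrict_le_self.absolutelyContinuous).prod (Measure.AbsolutelyContinuous.refl _)
    refine AEMeasurable.mono_ac ?_ hac
    have h1 : AEMeasurable (fun z : EuclideanSpace ℝ (Fin n) × EuclideanSpace ℝ (Fin n) => F z.2)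
        ((volume : Measure (EuclideanSpace ℝ (Fin n))).prod volume) :=
      hFmeas.comp_quasiMeasurePreserving Measure.quasiMeasurePreserving_snd
    have h2 : AEMeasurable
        (fun z : EuclideanSpace ℝ (Fin n) × EuclideanSpace ℝ (Fin n) => G (z.1 - z.2))
        ((volume : Measure (EuclideanSpace ℝ (Fin n))).prod volume) :=
      hGmeas.comp_quasiMeasurePreserving
        (Measure.quasiMeasurePreserving_fst.comp
          (measurePreserving_sub_prod
            (volume : Measure (EuclideanSpace ℝ (Fin n))) volume).quasiMeasurePreserving)
    exact h1.mul (h2.pow_const r)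
  have swap : ∫⁻ x in ball x₀ 1, ∫⁻ y, F y * G (x - y) ^ r ∂volume ∂volume
      = ∫⁻ y, ∫⁻ x in ball x₀ 1, F y * G (x - y) ^ r ∂volume ∂volume :=
    lintegral_lintegral_swap hprodmeas
  -- translation of inner integral
  have inner_eq : ∀ y : EuclideanSpace ℝ (Fin n), ∫⁻ x in ball x₀ 1, G (x - y) ^ r ∂volume
      = ∫⁻ x in ball (x₀ - y) 1, G x ^ r ∂volume := by
    intro y
    have hpre : ((· - y) : EuclideanSpace ℝ (Fin n) → EuclideanSpace ℝ (Fin n)) ⁻¹'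
        ball (x₀ - y) 1 = ball x₀ 1 := by
      ext x
      simp [mem_ball, dist_eq_norm, sub_sub_sub_cancel_right]
    have := (measurePreserving_sub_right (volume : Measure (EuclideanSpace ℝ (Fin n)))
        y).setLIntegral_comp_preimage_emb
      (MeasurableEquiv.subRight y).measurableEmbedding (fun x => G x ^ r) (ball (x₀ - y) 1)
    rw [hpre] at this
    exact this
  -- inner integral bounded by M ^ r
  have inner_le : ∀ y : EuclideanSpace ℝ (Fin n),
      ∫⁻ x in ball x₀ 1, G (x - y) ^ r ∂volume ≤ M ^ r := by
    intro y
    rw [inner_eq y]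
    have he : (∫⁻ x in ball (x₀ - y) 1, G x ^ r ∂volume)
        = (eLpNorm g p (volume.restrict (ball (x₀ - y) 1))) ^ r := by
      rw [eLpNorm_eq_lintegral_rpow_enorm_toReal hp0 hp', ← ENNReal.rpow_mul,
        one_div, inv_mul_cancel₀ (ne_of_gt hr0), ENNReal.rpow_one]
      rfl
    rw [he]
    exact ENNReal.rpow_le_rpow
      (le_iSup (fun x₀ : EuclideanSpace ℝ (Fin n) =>
        eLpNorm g p (volume.restrict (ball x₀ 1))) (x₀ - y)) hr0.le
  -- main chain
  have main : ∫⁻ x in ball x₀ 1, (‖∫ y, f y * g (x - y)‖₊ : ℝ≥0∞) ^ r ∂volume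
      ≤ A ^ (r - 1) * (A * M ^ r) := by
    calc ∫⁻ x in ball x₀ 1, (‖∫ y, f y * g (x - y)‖₊ : ℝ≥0∞) ^ r ∂volume
        ≤ ∫⁻ x in ball x₀ 1, A ^ (r - 1) * ∫⁻ y, F y * G (x - y) ^ r ∂volume ∂volume :=
          lintegral_mono fun x => step2 x
      _ = A ^ (r - 1) * ∫⁻ x in ball x₀ 1, ∫⁻ y, F y * G (x - y) ^ r ∂volume ∂volume :=
          lintegral_const_mul' _ _ (ENNReal.rpow_ne_top_of_nonneg (by linarith) hAne)
      _ = A ^ (r - 1) * ∫⁻ y, ∫⁻ x in ball x₀ 1, F y * G (x - y) ^ r ∂volume ∂volume := by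
          rw [swap]
      _ ≤ A ^ (r - 1) * (A * M ^ r) := by
          refine mul_le_mul_right ?_ _
          calc ∫⁻ y, ∫⁻ x in ball x₀ 1, F y * G (x - y) ^ r ∂volume ∂volume
              = ∫⁻ y, F y * ∫⁻ x in ball x₀ 1, G (x - y) ^ r ∂volume ∂volume := by
                refine lintegral_congr fun y => ?_
                rw [lintegral_const_mul' _ _ ENNReal.coe_ne_top]
            _ ≤ ∫⁻ y, F y * M ^ r ∂volume :=
                lintegral_mono fun y => mul_le_mul_right (inner_le y) _
            _ = A * M ^ r := lintegral_mul_const'' _ hFmeas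
  -- conclude
  rw [eLpNorm_eq_lintegral_rpow_enorm_toReal hp0 hp']
  have hkey : A ^ (r - 1) * (A * M ^ r) = (A * M) ^ r := by
    rw [← mul_assoc]
    nth_rewrite 2 [← ENNReal.rpow_one A]
    rw [← ENNReal.rpow_add_of_nonneg _ _ (by linarith) (by norm_num), sub_add_cancel,
      ← ENNReal.mul_rpow_of_nonneg _ _ hr0.le]
  calc (∫⁻ x in ball x₀ 1, (‖∫ y, f y * g (x - y)‖₊ : ℝ≥0∞) ^ r ∂volume) ^ (1/r)
      ≤ (A ^ (r - 1) * (A * M ^ r)) ^ (1/r) := ENNReal.rpow_le_rpow main (by positivity)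
    _ = A * M := by
        rw [hkey, ← ENNReal.rpow_mul, mul_one_div, div_self (ne_of_gt hr0), ENNReal.rpow_one]
end

section
/- For α > 0, f measurable with (1+|x|)^{(n+α)/2} f ∈ L²(ℝⁿ), and g ∈ L²_{uloc}(ℝⁿ), the convolution f * g satisfies ‖f * g‖_{L^∞(ℝⁿ)} ≤ C_α ‖(1+|x|)^{(n+α)/2} f‖_{L²(ℝⁿ)} ‖g‖_{L²_{uloc}(ℝⁿ)}. -/
open MeasureTheory Metric
open scoped ENNReal

/-- `‖f * g‖_{L^∞} ≤ C_α ‖(1+|x|)^{(n+α)/2} f‖_{L²} ‖g‖_{L²_uloc}`. -/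
theorem conv_Linfty_weighted (n : ℕ) (hn : 0 < n) (α : ℝ) (hα : 0 < α) :
    ∃ C > 0, ∀ f g : EuclideanSpace ℝ (Fin n) → ℝ,
      MemLp (fun x => (1 + ‖x‖) ^ (((n : ℝ) + α) / 2) * f x) 2 volume →
      AEStronglyMeasurable g volume →
      ∀ x, ENNReal.ofReal |∫ y, f y * g (x - y)| ≤
        ENNReal.ofReal C *
          eLpNorm (fun z => (1 + ‖z‖) ^ (((n : ℝ) + α) / 2) * f z) 2 volume *
          ⨆ x₀ : EuclideanSpace ℝ (Fin n), eLpNorm g 2 (volume.restrict (ball x₀ 1)) := by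
  classical
  set r : ℝ := (n : ℝ) + α with hr_def
  have hr_pos : 0 < r := by positivity
  set V : EuclideanSpace ℝ (Fin n) → ℝ≥0∞ :=
    fun z => ENNReal.ofReal ((1 + ‖z‖) ^ (-r)) with hV_def
  have hVcont : Continuous fun z : EuclideanSpace ℝ (Fin n) => (1 + ‖z‖) ^ (-r) :=
    (continuous_const.add continuous_norm).rpow_const fun z => Or.inl (ne_of_gt (add_pos_of_pos_of_nonneg one_pos (norm_nonneg _)))
  have hVmeas : Measurable V := (ENNReal.continuous_ofReal.comp hVcont).measurable
  set T : ℝ≥0∞ := ∫⁻ z : EuclideanSpace ℝ (Fin n), V z with hT_def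
  have hT : T < ∞ := by
    apply finite_integral_one_add_norm
    have : Module.finrank ℝ (EuclideanSpace ℝ (Fin n)) = n := by simp
    rw [this]; rw [hr_def]; linarith
  set volB : ℝ≥0∞ := volume (ball (0 : EuclideanSpace ℝ (Fin n)) 1) with hvolB_def
  have hvolB0 : volB ≠ 0 := (measure_ball_pos _ _ one_pos).ne'
  have hvolBt : volB ≠ ∞ := measure_ball_lt_top.ne
  set K : ℝ≥0∞ := (volB⁻¹ * ENNReal.ofReal (2 ^ r) * T) ^ (1 / 2 : ℝ) with hK_def
  have hKne : K ≠ ∞ := by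
    apply ENNReal.rpow_ne_top_of_nonneg (by norm_num)
    exact ENNReal.mul_ne_top
      (ENNReal.mul_ne_top (ENNReal.inv_ne_top.2 hvolB0) ENNReal.ofReal_ne_top) hT.ne
  refine ⟨K.toReal + 1, by positivity, ?_⟩
  intro f g hfmem hg x
  set M : ℝ≥0∞ := ⨆ x₀ : EuclideanSpace ℝ (Fin n), eLpNorm g 2 (volume.restrict (ball x₀ 1))
    with hM_def
  -- measurable representative of g
  set gm : EuclideanSpace ℝ (Fin n) → ℝ := hg.mk g with hgm_def
  have hgmmeas : Measurable gm := hg.stronglyMeasurable_mk.measurable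
  have hgg : g =ᵐ[volume] gm := hg.ae_eq_mk
  -- basic weight facts
  have hu_pos : ∀ y : EuclideanSpace ℝ (Fin n), (0:ℝ) < 1 + ‖y‖ := fun y => by positivity
  set W : EuclideanSpace ℝ (Fin n) → ℝ≥0∞ :=
    fun y => ENNReal.ofReal ((1 + ‖y‖) ^ (r / 2)) with hW_def
  have hW0 : ∀ y, W y ≠ 0 := fun y => by
    simp only [hW_def, ne_eq, ENNReal.ofReal_eq_zero, not_le]
    exact Real.rpow_pos_of_pos (hu_pos y) _
  have hWt : ∀ y, W y ≠ ∞ := fun y => ENNReal.ofReal_ne_top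
  have hWinv : ∀ y, (W y)⁻¹ = ENNReal.ofReal ((1 + ‖y‖) ^ (-(r / 2))) := by
    intro y
    have h1 : W y * ENNReal.ofReal ((1 + ‖y‖) ^ (-(r / 2))) = 1 := by
      rw [hW_def, ← ENNReal.ofReal_mul (Real.rpow_nonneg (hu_pos y).le _),
        ← Real.rpow_add (hu_pos y)]
      simp
    rw [← mul_one (W y)⁻¹, ← h1, ← mul_assoc, ENNReal.inv_mul_cancel (hW0 y) (hWt y), one_mul]
  -- measurability of f
  have hWc : Continuous fun y : EuclideanSpace ℝ (Fin n) => (1 + ‖y‖) ^ (r / 2) :=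
    (continuous_const.add continuous_norm).rpow_const fun z => Or.inl (ne_of_gt (add_pos_of_pos_of_nonneg one_pos (norm_nonneg _)))
  have hfm : AEStronglyMeasurable f volume := by
    have h1 : AEStronglyMeasurable
        (fun y : EuclideanSpace ℝ (Fin n) =>
          ((1 + ‖y‖) ^ (r / 2))⁻¹ * ((1 + ‖y‖) ^ (r / 2) * f y)) volume :=
      (hWc.inv₀ fun y => (Real.rpow_pos_of_pos (hu_pos y) _).ne').aestronglyMeasurable.mul
        hfmem.1
    refine h1.congr (Filter.Eventually.of_forall fun y => ?_)
    exact inv_mul_cancel_left₀ (Real.rpow_pos_of_pos (hu_pos y) (r/2)).ne' (f y)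
  set G : EuclideanSpace ℝ (Fin n) → ℝ≥0∞ :=
    fun y => (‖gm (x - y)‖₊ : ℝ≥0∞) ^ (2 : ℝ) with hG_def
  have hGmeas : Measurable G :=
    ((hgmmeas.comp (measurable_const.sub measurable_id)).nnnorm.coe_nnreal_ennreal).pow_const _
  have hsubmp : MeasurePreserving (fun y : EuclideanSpace ℝ (Fin n) => x - y) volume volume :=
    Measure.measurePreserving_sub_left volume x
  have hsubemb : MeasurableEmbedding (fun y : EuclideanSpace ℝ (Fin n) => x - y) :=
    (MeasurableEquiv.subLeft x).measurableEmbedding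
  -- Step A : pointwise weight bound
  have stepA : ∀ y, volB * V y ≤ ENNReal.ofReal (2 ^ r) * ∫⁻ z in ball y 1, V z := by
    intro y
    have h1 : ∫⁻ z in ball y 1, ENNReal.ofReal ((2 + ‖y‖) ^ (-r)) ∂volume
        ≤ ∫⁻ z in ball y 1, V z := by
      refine setLIntegral_mono (hVmeas) fun z hz => ?_
      apply ENNReal.ofReal_le_ofReal
      rw [Real.rpow_neg (by positivity), Real.rpow_neg (by positivity)]
      apply inv_anti₀ (Real.rpow_pos_of_pos (by positivity) _)
      apply Real.rpow_le_rpow (by positivity) ?_ hr_pos.le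
      have h4 := mem_ball_iff_norm.1 hz
      have h5 : ‖z‖ - ‖y‖ ≤ ‖z - y‖ := norm_sub_norm_le _ _
      linarith
    rw [setLIntegral_const, Measure.addHaar_ball_center, ← hvolB_def] at h1
    have hreal : (1 + ‖y‖) ^ (-r) ≤ 2 ^ r * (2 + ‖y‖) ^ (-r) := by
      have h2 : (2 + ‖y‖ : ℝ) ≤ 2 * (1 + ‖y‖) := by linarith [norm_nonneg y]
      have h3 : (2 * (1 + ‖y‖)) ^ (-r) ≤ (2 + ‖y‖) ^ (-r) := by
        rw [Real.rpow_neg (by positivity), Real.rpow_neg (by positivity)]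
        exact inv_anti₀ (Real.rpow_pos_of_pos (by positivity) _)
          (Real.rpow_le_rpow (by positivity) h2 hr_pos.le)
      calc (1 + ‖y‖) ^ (-r) = 2 ^ r * (2 * (1 + ‖y‖)) ^ (-r) := by
            rw [Real.mul_rpow (by norm_num) (by positivity), ← mul_assoc,
              ← Real.rpow_add (by norm_num : (0:ℝ) < 2), add_neg_cancel, Real.rpow_zero, one_mul]
        _ ≤ 2 ^ r * (2 + ‖y‖) ^ (-r) := by
            exact mul_le_mul_of_nonneg_left h3 (by positivity)
    calc volB * V y
        ≤ volB * (ENNReal.ofReal (2 ^ r) * ENNReal.ofReal ((2 + ‖y‖) ^ (-r))) := by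
          apply mul_le_mul_right
          rw [← ENNReal.ofReal_mul (by positivity)]
          exact ENNReal.ofReal_le_ofReal hreal
      _ = ENNReal.ofReal (2 ^ r) * (ENNReal.ofReal ((2 + ‖y‖) ^ (-r)) * volB) := by ring
      _ ≤ ENNReal.ofReal (2 ^ r) * ∫⁻ z in ball y 1, V z := mul_le_mul_right h1 _
  -- Step B : ball integral of G bounded by M^2
  have stepB : ∀ z, ∫⁻ y in ball z 1, G y ≤ M ^ (2 : ℝ) := by
    intro z
    have hpre : (fun y : EuclideanSpace ℝ (Fin n) => x - y) ⁻¹' (ball (x - z) 1) = ball z 1 := by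
      ext y
      simp only [Set.mem_preimage, mem_ball, dist_sub_left]
    have h1 : ∫⁻ y in ball z 1, G y
        = ∫⁻ u in ball (x - z) 1, (‖gm u‖₊ : ℝ≥0∞) ^ (2 : ℝ) := by
      rw [← hpre]
      exact hsubmp.setLIntegral_comp_preimage_emb hsubemb
        (fun u => (‖gm u‖₊ : ℝ≥0∞) ^ (2 : ℝ)) _
    have h2 : ∫⁻ u in ball (x - z) 1, (‖gm u‖₊ : ℝ≥0∞) ^ (2 : ℝ)
        = ∫⁻ u in ball (x - z) 1, (‖g u‖₊ : ℝ≥0∞) ^ (2 : ℝ) := by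
      refine lintegral_congr_ae ?_
      filter_upwards [ae_restrict_of_ae hgg] with u hu
      rw [hu]
    have h3 : ∫⁻ u in ball (x - z) 1, (‖g u‖₊ : ℝ≥0∞) ^ (2 : ℝ)
        = (eLpNorm g 2 (volume.restrict (ball (x - z) 1))) ^ (2 : ℝ) := by
      rw [eLpNorm_eq_lintegral_rpow_enorm_toReal (by norm_num) (by norm_num)]
      rw [← ENNReal.rpow_mul]
      norm_num
      rfl
    rw [h1, h2, h3]
    exact ENNReal.rpow_le_rpow
      (le_iSup (fun x₀ => eLpNorm g 2 (volume.restrict (ball x₀ 1))) (x - z)) (by norm_num)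
  -- the Tonelli swap
  have hGne : ∀ y, G y ≠ ∞ := fun y =>
    ENNReal.rpow_ne_top_of_nonneg (by norm_num) ENNReal.coe_ne_top
  have hswap : ∫⁻ y, (∫⁻ z in ball y 1, V z) * G y
      = ∫⁻ z, V z * ∫⁻ y in ball z 1, G y := by
    set P : EuclideanSpace ℝ (Fin n) × EuclideanSpace ℝ (Fin n) → ℝ≥0∞ :=
      fun p => Set.indicator {p : EuclideanSpace ℝ (Fin n) × EuclideanSpace ℝ (Fin n) |
        dist p.2 p.1 < 1} (fun p => V p.2 * G p.1) p with hP_def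
    have hsetmeas : MeasurableSet {p : EuclideanSpace ℝ (Fin n) × EuclideanSpace ℝ (Fin n) |
        dist p.2 p.1 < 1} :=
      (isOpen_lt (continuous_dist.comp (continuous_snd.prodMk continuous_fst))
        continuous_const).measurableSet
    have hPmeas : Measurable P := by
      apply Measurable.indicator ?_ hsetmeas
      exact (hVmeas.comp measurable_snd).mul (hGmeas.comp measurable_fst)
    have hcur : ∀ y z, P (y, z) = (ball y 1).indicator V z * G y := by
      intro y z
      simp only [hP_def, Set.indicator_apply, Set.mem_setOf_eq, mem_ball]
      split_ifs with h
      · rfl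
      · rw [zero_mul]
    have hcur2 : ∀ y z, P (y, z) = (ball z 1).indicator (fun y => V z * G y) y := by
      intro y z
      simp only [hP_def, Set.indicator_apply, Set.mem_setOf_eq, mem_ball]
      rw [dist_comm z y]
    calc ∫⁻ y, (∫⁻ z in ball y 1, V z) * G y
        = ∫⁻ y, ∫⁻ z, P (y, z) := by
          refine lintegral_congr fun y => ?_
          rw [← lintegral_indicator measurableSet_ball,
            ← lintegral_mul_const' (G y) _ (hGne y)]
          exact lintegral_congr fun z => (hcur y z).symm
      _ = ∫⁻ z, ∫⁻ y, P (y, z) := by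
          exact lintegral_lintegral_swap hPmeas.aemeasurable
      _ = ∫⁻ z, V z * ∫⁻ y in ball z 1, G y := by
          refine lintegral_congr fun z => ?_
          simp only [hcur2]
          rw [lintegral_indicator measurableSet_ball,
            lintegral_const_mul' (V z) _ ENNReal.ofReal_ne_top]
  -- pointwise identity for the second Hoelder factor
  have hpt : ∀ y, ((W y)⁻¹ * (‖gm (x - y)‖₊ : ℝ≥0∞)) ^ (2 : ℝ) = V y * G y := by
    intro y
    rw [hWinv y, ENNReal.mul_rpow_of_nonneg _ _ (by norm_num : (0:ℝ) ≤ 2),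
      ENNReal.ofReal_rpow_of_nonneg (Real.rpow_nonneg (hu_pos y).le _) (by norm_num)]
    have hexp : ((1 + ‖y‖) ^ (-(r / 2))) ^ (2 : ℝ) = (1 + ‖y‖) ^ (-r) := by
      rw [← Real.rpow_mul (hu_pos y).le]
      norm_num
    rw [hexp]
  have hint : ∫⁻ y, ((W y)⁻¹ * (‖gm (x - y)‖₊ : ℝ≥0∞)) ^ (2 : ℝ) = ∫⁻ y, V y * G y :=
    lintegral_congr fun y => hpt y
  -- main estimate for the second factor
  have hmain : volB * ∫⁻ y, V y * G y ≤ ENNReal.ofReal (2 ^ r) * (T * M ^ (2 : ℝ)) := by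
    calc volB * ∫⁻ y, V y * G y = ∫⁻ y, volB * V y * G y := by
          rw [← lintegral_const_mul' _ _ hvolBt]
          exact lintegral_congr fun y => by rw [mul_assoc]
      _ ≤ ∫⁻ y, (ENNReal.ofReal (2 ^ r) * ∫⁻ z in ball y 1, V z) * G y :=
          lintegral_mono fun y => mul_le_mul_left (stepA y) _
      _ = ENNReal.ofReal (2 ^ r) * ∫⁻ y, (∫⁻ z in ball y 1, V z) * G y := by
          rw [← lintegral_const_mul' _ _ ENNReal.ofReal_ne_top]
          exact lintegral_congr fun y => by rw [mul_assoc]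
      _ = ENNReal.ofReal (2 ^ r) * ∫⁻ z, V z * ∫⁻ y in ball z 1, G y := by rw [hswap]
      _ ≤ ENNReal.ofReal (2 ^ r) * ∫⁻ z, V z * M ^ (2 : ℝ) :=
          mul_le_mul_right (lintegral_mono fun z => mul_le_mul_right (stepB z) _) _
      _ = ENNReal.ofReal (2 ^ r) * (T * M ^ (2 : ℝ)) := by
          rw [lintegral_mul_const'' _ hVmeas.aemeasurable]
  have hX : ∫⁻ y, V y * G y ≤ volB⁻¹ * ENNReal.ofReal (2 ^ r) * T * M ^ (2 : ℝ) := by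
    have h := mul_le_mul_right hmain volB⁻¹
    rw [← mul_assoc, ENNReal.inv_mul_cancel hvolB0 hvolBt, one_mul] at h
    calc ∫⁻ y, V y * G y ≤ volB⁻¹ * (ENNReal.ofReal (2 ^ r) * (T * M ^ (2 : ℝ))) := h
      _ = volB⁻¹ * ENNReal.ofReal (2 ^ r) * T * M ^ (2 : ℝ) := by ring
  have hfac2 : (∫⁻ y, ((W y)⁻¹ * (‖gm (x - y)‖₊ : ℝ≥0∞)) ^ (2 : ℝ)) ^ (1/2 : ℝ) ≤ K * M := by
    calc (∫⁻ y, ((W y)⁻¹ * (‖gm (x - y)‖₊ : ℝ≥0∞)) ^ (2 : ℝ)) ^ (1/2 : ℝ)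
        = (∫⁻ y, V y * G y) ^ (1/2 : ℝ) := by rw [hint]
      _ ≤ (volB⁻¹ * ENNReal.ofReal (2 ^ r) * T * M ^ (2 : ℝ)) ^ (1/2 : ℝ) :=
          ENNReal.rpow_le_rpow hX (by norm_num)
      _ = K * M := by
          rw [ENNReal.mul_rpow_of_nonneg _ _ (by norm_num : (0:ℝ) ≤ 1/2), hK_def,
            ← ENNReal.rpow_mul]
          norm_num
  -- first factor
  have hWmeas : Measurable W := (ENNReal.continuous_ofReal.comp hWc).measurable
  have hfac1 : (∫⁻ y, (W y * (‖f y‖₊ : ℝ≥0∞)) ^ (2 : ℝ)) ^ (1/2 : ℝ)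
      = eLpNorm (fun z => (1 + ‖z‖) ^ (r / 2) * f z) 2 volume := by
    rw [eLpNorm_eq_lintegral_rpow_enorm_toReal (by norm_num) (by norm_num)]
    simp only [ENNReal.toReal_ofNat]
    congr 1
    refine lintegral_congr fun y => ?_
    congr 1
    rw [enorm_mul, Real.enorm_eq_ofReal (Real.rpow_nonneg (hu_pos y).le _)]
    rfl
  have hKle : K ≤ ENNReal.ofReal (K.toReal + 1) := by
    calc K = ENNReal.ofReal K.toReal := (ENNReal.ofReal_toReal hKne).symm
      _ ≤ ENNReal.ofReal (K.toReal + 1) := ENNReal.ofReal_le_ofReal (by linarith)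
  -- assemble
  calc ENNReal.ofReal |∫ y, f y * g (x - y)|
      = (‖∫ y, f y * g (x - y)‖₊ : ℝ≥0∞) := (Real.enorm_eq_ofReal_abs _).symm
    _ ≤ ∫⁻ y, (‖f y * g (x - y)‖₊ : ℝ≥0∞) := enorm_integral_le_lintegral_enorm _
    _ = ∫⁻ y, (W y * (‖f y‖₊ : ℝ≥0∞)) * ((W y)⁻¹ * (‖gm (x - y)‖₊ : ℝ≥0∞)) := by
        refine lintegral_congr_ae ?_
        filter_upwards [hsubmp.quasiMeasurePreserving.ae_eq hgg] with y hy
        have hy' : g (x - y) = gm (x - y) := hy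
        rw [nnnorm_mul, ENNReal.coe_mul, hy', mul_mul_mul_comm,
          ENNReal.mul_inv_cancel (hW0 y) (hWt y), one_mul]
    _ ≤ (∫⁻ y, (W y * (‖f y‖₊ : ℝ≥0∞)) ^ (2 : ℝ)) ^ (1/2 : ℝ) *
        (∫⁻ y, ((W y)⁻¹ * (‖gm (x - y)‖₊ : ℝ≥0∞)) ^ (2 : ℝ)) ^ (1/2 : ℝ) := by
        have hA : AEMeasurable (fun y => W y * (‖f y‖₊ : ℝ≥0∞)) volume :=
          hWmeas.aemeasurable.mul hfm.enorm
        have hB : AEMeasurable (fun y => (W y)⁻¹ * (‖gm (x - y)‖₊ : ℝ≥0∞)) volume :=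
          hWmeas.inv.aemeasurable.mul
            ((hgmmeas.comp (measurable_const.sub measurable_id)).nnnorm.coe_nnreal_ennreal.aemeasurable)
        have h := ENNReal.lintegral_mul_le_Lp_mul_Lq volume
          Real.HolderConjugate.two_two hA hB
        simpa using h
    _ ≤ eLpNorm (fun z => (1 + ‖z‖) ^ (r / 2) * f z) 2 volume * (K * M) := by
        rw [hfac1]
        exact mul_le_mul_right hfac2 _
    _ = K * eLpNorm (fun z => (1 + ‖z‖) ^ (r / 2) * f z) 2 volume * M := by ring
    _ ≤ ENNReal.ofReal (K.toReal + 1) *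
          eLpNorm (fun z => (1 + ‖z‖) ^ (r / 2) * f z) 2 volume * M :=
        mul_le_mul_left (mul_le_mul_left hKle _) _
end

section
/- Let G₁ be a function on ℝⁿ satisfying the pointwise decay |G₁(x)| ≤ C(1+|x|)^{-n-α} for some α > 0, and for t > 0 set G_t(x) = t^{-n/(2s)} G₁(x / t^{1/(2s)}). Then for all 1 ≤ r < ∞, t > 0, and f ∈ L^r_{uloc}(ℝⁿ), the convolution satisfies ‖G_t * f‖_{L^∞(ℝⁿ)} ≤ C' max{1, t^{-n/(2sr)}} ‖f‖_{L^r_{uloc}(ℝⁿ)} for a constant C' depending only on n, s, α, C. -/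
open MeasureTheory Metric
open scoped ENNReal

set_option maxHeartbeats 1600000 in
/-- `L^r_uloc → L^∞` bound for convolution with a self-similar kernel with
polynomial decay. -/
theorem kernel_conv_Linfty_uloc (n : ℕ) (hn : 0 < n) (s α C : ℝ)
    (hs : 0 < s) (hα : 0 < α) (hC : 0 < C)
    (G₁ : EuclideanSpace ℝ (Fin n) → ℝ)
    (hG : ∀ x, |G₁ x| ≤ C * (1 + ‖x‖) ^ (-((n : ℝ) + α))) :
    ∃ C' > 0, ∀ r : ℝ, 1 ≤ r → ∀ t : ℝ, 0 < t →
      ∀ f : EuclideanSpace ℝ (Fin n) → ℝ, ∀ x,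
        ENNReal.ofReal
            |∫ y, (t ^ (-(n : ℝ) / (2 * s)) * G₁ ((t ^ (-(1 : ℝ) / (2 * s))) • (x - y))) * f y| ≤
          ENNReal.ofReal (C' * max 1 (t ^ (-(n : ℝ) / (2 * s * r)))) *
            ⨆ x₀ : EuclideanSpace ℝ (Fin n),
              eLpNorm f (ENNReal.ofReal r) (volume.restrict (ball x₀ 1)) := by
  classical
  have hfr : Module.finrank ℝ (EuclideanSpace ℝ (Fin n)) = n := finrank_euclideanSpace_fin
  haveI hnt : Nontrivial (EuclideanSpace ℝ (Fin n)) := by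
    rw [← Module.finrank_pos_iff (R := ℝ), hfr]
    exact hn
  -- the decay profile is integrable
  have hφi : Integrable (fun v : EuclideanSpace ℝ (Fin n) => (1 + ‖v‖) ^ (-((n : ℝ) + α))) := by
    have h1 : ((Module.finrank ℝ (EuclideanSpace ℝ (Fin n))) : ℝ) < (n : ℝ) + α := by
      rw [hfr]; linarith
    exact integrable_one_add_norm h1
  set K : ℝ := ∫ v : EuclideanSpace ℝ (Fin n), (1 + ‖v‖) ^ (-((n : ℝ) + α)) with hKdef
  have hK0 : 0 ≤ K := integral_nonneg fun v => Real.rpow_nonneg (by positivity) _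
  set v₁ : ℝ := (volume (ball (0 : EuclideanSpace ℝ (Fin n)) 1)).toReal with hv₁def
  have hv₁0 : 0 < v₁ :=
    ENNReal.toReal_pos (measure_ball_pos _ _ one_pos).ne' measure_ball_lt_top.ne
  set C2 : ℝ := C * 2 ^ ((n : ℝ) + α) with hC2def
  have hC20 : 0 < C2 := by positivity
  refine ⟨max 1 (C2 * K * max 1 v₁⁻¹), lt_of_lt_of_le one_pos (le_max_left _ _), ?_⟩
  intro r hr t ht f x
  have hr0 : (0 : ℝ) < r := lt_of_lt_of_le one_pos hr
  set δ : ℝ := t ^ (1 / (2 * s)) with hδdef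
  have hδ0 : 0 < δ := Real.rpow_pos_of_pos ht _
  set ρ : ℝ := min δ 1 with hρdef
  have hρ0 : 0 < ρ := lt_min hδ0 one_pos
  have hρ1 : ρ ≤ 1 := min_le_right _ _
  have hρδ : ρ ≤ δ := min_le_left _ _
  set p : ℝ≥0∞ := ENNReal.ofReal r with hpdef
  set M : ℝ≥0∞ := ⨆ x₀ : EuclideanSpace ℝ (Fin n),
      eLpNorm f p (volume.restrict (ball x₀ 1)) with hMdef
  set F : EuclideanSpace ℝ (Fin n) → ℝ :=
    fun y => (t ^ (-(n : ℝ) / (2 * s)) * G₁ ((t ^ (-(1 : ℝ) / (2 * s))) • (x - y))) * f y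
    with hFdef
  by_cases hFi : Integrable F
  swap
  · rw [integral_undef hFi]
    simp
  -- exponent identities
  have hcoef : t ^ (-(n : ℝ) / (2 * s)) = δ ^ (-(n : ℝ)) := by
    have h1 : δ ^ (-(n : ℝ)) = t ^ ((1 / (2 * s)) * (-(n : ℝ))) := by
      rw [hδdef, ← Real.rpow_mul ht.le]
    rw [h1]
    congr 1
    ring
  have harg : t ^ (-(1 : ℝ) / (2 * s)) = δ⁻¹ := by
    have h1 : δ⁻¹ = t ^ ((1 / (2 * s)) * (-1 : ℝ)) := by
      rw [hδdef, Real.rpow_mul ht.le, Real.rpow_neg_one]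
    rw [h1]
    congr 1
    ring
  -- the enveloping kernel bound
  set B : EuclideanSpace ℝ (Fin n) → ℝ :=
    fun w => C2 * (δ ^ (-(n : ℝ)) * (1 + ‖x - w‖ / δ) ^ (-((n : ℝ) + α))) with hBdef
  have hB0 : ∀ w, 0 ≤ B w := by
    intro w
    have : (0:ℝ) < 1 + ‖x - w‖ / δ := by positivity
    positivity
  have hkey : ∀ w, ∀ y ∈ ball w ρ,
      |t ^ (-(n : ℝ) / (2 * s)) * G₁ ((t ^ (-(1 : ℝ) / (2 * s))) • (x - y))| ≤ B w := by
    intro w y hy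
    rw [hcoef, harg, abs_mul, abs_of_pos (Real.rpow_pos_of_pos hδ0 _)]
    have hnorm : ‖δ⁻¹ • (x - y)‖ = ‖x - y‖ / δ := by
      rw [norm_smul, norm_inv, Real.norm_eq_abs, abs_of_pos hδ0, div_eq_inv_mul]
    have hGb := hG (δ⁻¹ • (x - y))
    rw [hnorm] at hGb
    set a : ℝ := 1 + ‖x - y‖ / δ with hadef
    set b : ℝ := 1 + ‖x - w‖ / δ with hbdef
    have ha1 : 1 ≤ a := le_add_of_nonneg_right (by positivity)
    have hb0 : 0 < b := by rw [hbdef]; positivity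
    have hba : b ≤ 2 * a := by
      have h2 : dist x w ≤ dist x y + dist y w := dist_triangle _ _ _
      have h3 : dist y w < ρ := mem_ball.mp hy
      have h1 : ‖x - w‖ ≤ ‖x - y‖ + ρ := by
        rw [← dist_eq_norm, ← dist_eq_norm]
        linarith
      have h4 : ‖x - w‖ / δ ≤ ‖x - y‖ / δ + ρ / δ := by
        rw [← add_div]
        gcongr
      have h5 : ρ / δ ≤ 1 := (div_le_one hδ0).mpr hρδ
      rw [hadef, hbdef] at *
      linarith
    have hcomp : a ^ (-((n : ℝ) + α)) ≤ 2 ^ ((n : ℝ) + α) * b ^ (-((n : ℝ) + α)) := by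
      have h2a : (2 * a) ^ (-((n : ℝ) + α)) ≤ b ^ (-((n : ℝ) + α)) :=
        Real.rpow_le_rpow_of_nonpos hb0 hba (neg_nonpos.mpr (by positivity))
      have hsplit : (2 * a) ^ (-((n : ℝ) + α)) =
          2 ^ (-((n : ℝ) + α)) * a ^ (-((n : ℝ) + α)) :=
        Real.mul_rpow (by norm_num) (by linarith)
      have h2cancel : (2 : ℝ) ^ ((n : ℝ) + α) * 2 ^ (-((n : ℝ) + α)) = 1 := by
        have hz : (n:ℝ) + α + -((n:ℝ) + α) = 0 := by ring
        rw [← Real.rpow_add two_pos, hz, Real.rpow_zero]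
      calc a ^ (-((n : ℝ) + α))
          = 2 ^ ((n : ℝ) + α) * ((2 * a) ^ (-((n : ℝ) + α))) := by
            rw [hsplit, ← mul_assoc, h2cancel, one_mul]
        _ ≤ 2 ^ ((n : ℝ) + α) * b ^ (-((n : ℝ) + α)) :=
            mul_le_mul_of_nonneg_left h2a (by positivity)
    calc δ ^ (-(n : ℝ)) * |G₁ (δ⁻¹ • (x - y))|
        ≤ δ ^ (-(n : ℝ)) * (C * a ^ (-((n : ℝ) + α))) :=
          mul_le_mul_of_nonneg_left hGb (by positivity)
      _ ≤ δ ^ (-(n : ℝ)) * (C * (2 ^ ((n : ℝ) + α) * b ^ (-((n : ℝ) + α)))) :=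
          mul_le_mul_of_nonneg_left
            (mul_le_mul_of_nonneg_left hcomp hC.le) (by positivity)
      _ = B w := by rw [hBdef, hC2def]; ring
  -- measurable data
  have hFm : AEStronglyMeasurable F volume := hFi.aestronglyMeasurable
  set g : EuclideanSpace ℝ (Fin n) → ℝ≥0∞ := fun y => (‖F y‖₊ : ℝ≥0∞) with hgdef
  obtain ⟨g₀, hg₀m, hgg₀⟩ := hFm.enorm
  -- ball volumes
  set Vb : ℝ≥0∞ := volume (ball (0 : EuclideanSpace ℝ (Fin n)) ρ) with hVbdef
  have hVball : ∀ w : EuclideanSpace ℝ (Fin n), volume (ball w ρ) = Vb := by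
    intro w
    rw [hVbdef, Measure.addHaar_ball volume w hρ0.le, Measure.addHaar_ball volume 0 hρ0.le]
  have hVbeq : Vb = ENNReal.ofReal (ρ ^ n * v₁) := by
    rw [hVbdef, Measure.addHaar_ball volume 0 hρ0.le, hfr,
      ENNReal.ofReal_mul (by positivity), hv₁def, ENNReal.ofReal_toReal measure_ball_lt_top.ne]
  have hVb0 : Vb ≠ 0 := by
    rw [hVbeq]
    simp only [ne_eq, ENNReal.ofReal_eq_zero, not_le]
    positivity
  have hVbtop : Vb ≠ ⊤ := by rw [hVbeq]; exact ENNReal.ofReal_ne_top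
  -- Tonelli / averaging identity
  have hswap : ∫⁻ w, ∫⁻ y in ball w ρ, g₀ y ∂volume ∂volume = Vb * ∫⁻ y, g₀ y := by
    have hSmeas : MeasurableSet {q : EuclideanSpace ℝ (Fin n) × EuclideanSpace ℝ (Fin n) |
        q.2 ∈ ball q.1 ρ} := by
      have : IsOpen {q : EuclideanSpace ℝ (Fin n) × EuclideanSpace ℝ (Fin n) |
          dist q.2 q.1 < ρ} :=
        isOpen_lt (continuous_dist.comp (continuous_snd.prodMk continuous_fst)) continuous_const
      exact this.measurableSet
    have h1 : ∀ w, ∫⁻ y in ball w ρ, g₀ y ∂volume =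
        ∫⁻ y, {q : EuclideanSpace ℝ (Fin n) × EuclideanSpace ℝ (Fin n) |
          q.2 ∈ ball q.1 ρ}.indicator (fun q => g₀ q.2) (w, y) ∂volume := by
      intro w
      rw [← lintegral_indicator measurableSet_ball]
      refine lintegral_congr fun y => ?_
      by_cases hy : y ∈ ball w ρ
      · rw [Set.indicator_of_mem hy,
          Set.indicator_of_mem (show (w, y) ∈ {q : EuclideanSpace ℝ (Fin n) ×
            EuclideanSpace ℝ (Fin n) | q.2 ∈ ball q.1 ρ} from hy)]
      · rw [Set.indicator_of_notMem hy,
          Set.indicator_of_notMem (show (w, y) ∉ {q : EuclideanSpace ℝ (Fin n) ×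
            EuclideanSpace ℝ (Fin n) | q.2 ∈ ball q.1 ρ} from hy)]
    calc ∫⁻ w, ∫⁻ y in ball w ρ, g₀ y ∂volume ∂volume
        = ∫⁻ w, ∫⁻ y, {q : EuclideanSpace ℝ (Fin n) × EuclideanSpace ℝ (Fin n) |
            q.2 ∈ ball q.1 ρ}.indicator (fun q => g₀ q.2) (w, y) ∂volume ∂volume := by
          exact lintegral_congr h1
      _ = ∫⁻ y, ∫⁻ w, {q : EuclideanSpace ℝ (Fin n) × EuclideanSpace ℝ (Fin n) |
            q.2 ∈ ball q.1 ρ}.indicator (fun q => g₀ q.2) (w, y) ∂volume ∂volume := by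
          exact lintegral_lintegral_swap
            (((hg₀m.comp measurable_snd).indicator hSmeas).aemeasurable)
      _ = ∫⁻ y, g₀ y * Vb ∂volume := by
          refine lintegral_congr fun y => ?_
          have h2 : ∀ w : EuclideanSpace ℝ (Fin n),
              {q : EuclideanSpace ℝ (Fin n) × EuclideanSpace ℝ (Fin n) |
                q.2 ∈ ball q.1 ρ}.indicator (fun q => g₀ q.2) (w, y) =
              (ball y ρ).indicator (fun _ => g₀ y) w := by
            intro w
            by_cases h : w ∈ ball y ρ
            · have h' : y ∈ ball w ρ := by
                rw [mem_ball] at h ⊢; rwa [dist_comm]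
              rw [Set.indicator_of_mem (show (w, y) ∈ {q : EuclideanSpace ℝ (Fin n) ×
                  EuclideanSpace ℝ (Fin n) | q.2 ∈ ball q.1 ρ} from h'),
                Set.indicator_of_mem h]
            · have h' : y ∉ ball w ρ := by
                rw [mem_ball] at h ⊢; rwa [dist_comm]
              rw [Set.indicator_of_notMem (show (w, y) ∉ {q : EuclideanSpace ℝ (Fin n) ×
                  EuclideanSpace ℝ (Fin n) | q.2 ∈ ball q.1 ρ} from h'),
                Set.indicator_of_notMem h]
          simp_rw [h2]
          rw [lintegral_indicator measurableSet_ball, setLIntegral_const, hVball y]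
      _ = (∫⁻ y, g₀ y) * Vb := lintegral_mul_const _ hg₀m
      _ = Vb * ∫⁻ y, g₀ y := mul_comm _ _
  -- the inner (Hölder on a small ball) estimate
  have hple : (1 : ℝ≥0∞) ≤ p := by
    rw [hpdef]
    exact ENNReal.one_le_ofReal.mpr hr
  have hinner : ∀ w, ∫⁻ y in ball w ρ, g y ∂volume ≤
      ENNReal.ofReal (B w) * (M * Vb ^ (1 - 1 / r)) := by
    intro w
    have e1 : ∫⁻ y in ball w ρ, g y ∂volume = eLpNorm F 1 (volume.restrict (ball w ρ)) := by
      rw [eLpNorm_one_eq_lintegral_enorm]; rfl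
    have e2 : eLpNorm F 1 (volume.restrict (ball w ρ)) ≤
        eLpNorm F p (volume.restrict (ball w ρ)) * Vb ^ (1 - 1 / r) := by
      have h := eLpNorm_le_eLpNorm_mul_rpow_measure_univ (μ := volume.restrict (ball w ρ))
        hple hFm.restrict
      have hexp : 1 / (1 : ℝ≥0∞).toReal - 1 / p.toReal = 1 - 1 / r := by
        rw [hpdef, ENNReal.toReal_ofReal (by linarith)]
        simp
      rwa [Measure.restrict_apply_univ, hVball w, hexp] at h
    have e3 : eLpNorm F p (volume.restrict (ball w ρ)) ≤ ENNReal.ofReal (B w) * M := by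
      have hb : eLpNorm F p (volume.restrict (ball w ρ)) ≤
          eLpNorm (fun y => B w * f y) p (volume.restrict (ball w ρ)) := by
        apply eLpNorm_mono_ae
        refine (ae_restrict_iff' measurableSet_ball).2 (ae_of_all _ fun y hy => ?_)
        calc ‖F y‖ = |t ^ (-(n : ℝ) / (2 * s)) * G₁ ((t ^ (-(1 : ℝ) / (2 * s))) • (x - y))| *
              |f y| := by
              simp only [hFdef]
              rw [Real.norm_eq_abs, abs_mul]
          _ ≤ B w * |f y| := mul_le_mul_of_nonneg_right (hkey w y hy) (abs_nonneg _)
          _ = ‖B w * f y‖ := by rw [Real.norm_eq_abs, abs_mul, abs_of_nonneg (hB0 w)]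
      have hsmul : eLpNorm (fun y => B w * f y) p (volume.restrict (ball w ρ)) ≤
          ENNReal.ofReal (B w) * eLpNorm f p (volume.restrict (ball w ρ)) := by
        have h1 : (fun y => B w * f y) = (B w) • f := by
          funext y
          simp [smul_eq_mul]
        rw [h1]
        refine (eLpNorm_const_smul_le).trans (le_of_eq ?_)
        rw [Real.enorm_eq_ofReal (hB0 w)]
      have hmono : eLpNorm f p (volume.restrict (ball w ρ)) ≤ M := by
        refine le_trans (eLpNorm_mono_measure f
          (Measure.restrict_mono (ball_subset_ball hρ1) le_rfl)) ?_
        rw [hMdef]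
        exact le_iSup (fun x₀ => eLpNorm f p (volume.restrict (ball x₀ 1))) w
      exact hb.trans (hsmul.trans (mul_le_mul_right hmono _))
    calc ∫⁻ y in ball w ρ, g y ∂volume
        ≤ eLpNorm F p (volume.restrict (ball w ρ)) * Vb ^ (1 - 1 / r) := by
          rw [e1]; exact e2
      _ ≤ ENNReal.ofReal (B w) * M * Vb ^ (1 - 1 / r) := mul_le_mul_left e3 _
      _ = ENNReal.ofReal (B w) * (M * Vb ^ (1 - 1 / r)) := mul_assoc _ _ _
  -- the outer integral of the envelope
  have hBcont : Continuous B := by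
    rw [hBdef]
    refine continuous_const.mul (continuous_const.mul ?_)
    refine Continuous.rpow_const ?_ ?_
    · exact continuous_const.add ((continuous_const.sub continuous_id).norm.div_const δ)
    · intro w
      left
      have : (0:ℝ) < 1 + ‖x - w‖ / δ := by positivity
      exact this.ne'
  have hψcont : Continuous fun w : EuclideanSpace ℝ (Fin n) =>
      δ ^ (-(n : ℝ)) * (1 + ‖x - w‖ / δ) ^ (-((n : ℝ) + α)) := by
    refine continuous_const.mul ?_
    refine Continuous.rpow_const ?_ ?_
    · exact continuous_const.add ((continuous_const.sub continuous_id).norm.div_const δ)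
    · intro w
      left
      have : (0:ℝ) < 1 + ‖x - w‖ / δ := by positivity
      exact this.ne'
  have houter : ∫⁻ w, ENNReal.ofReal (B w) ∂volume =
      ENNReal.ofReal C2 * ENNReal.ofReal K := by
    have hψi : Integrable (fun w : EuclideanSpace ℝ (Fin n) =>
        δ ^ (-(n : ℝ)) * (1 + ‖x - w‖ / δ) ^ (-((n : ℝ) + α))) := by
      have h1 : Integrable (fun v : EuclideanSpace ℝ (Fin n) =>
          (1 + ‖δ⁻¹ • v‖) ^ (-((n : ℝ) + α))) :=
        hφi.comp_smul (inv_ne_zero hδ0.ne')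
      have h2 : Integrable (fun w : EuclideanSpace ℝ (Fin n) =>
          (1 + ‖δ⁻¹ • (x - w)‖) ^ (-((n : ℝ) + α))) := h1.comp_sub_left x
      have h3 : (fun w : EuclideanSpace ℝ (Fin n) =>
          (1 + ‖δ⁻¹ • (x - w)‖) ^ (-((n : ℝ) + α))) =
          fun w => (1 + ‖x - w‖ / δ) ^ (-((n : ℝ) + α)) := by
        funext w
        rw [norm_smul, norm_inv, Real.norm_eq_abs, abs_of_pos hδ0, div_eq_inv_mul]
      rw [h3] at h2
      exact h2.const_mul _
    have hψnn : 0 ≤ᵐ[volume] fun w : EuclideanSpace ℝ (Fin n) =>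
        δ ^ (-(n : ℝ)) * (1 + ‖x - w‖ / δ) ^ (-((n : ℝ) + α)) := by
      refine ae_of_all _ fun w => ?_
      have : (0:ℝ) < 1 + ‖x - w‖ / δ := by positivity
      positivity
    have hre : (fun w => ENNReal.ofReal (B w)) = fun w =>
        ENNReal.ofReal C2 * ENNReal.ofReal
          (δ ^ (-(n : ℝ)) * (1 + ‖x - w‖ / δ) ^ (-((n : ℝ) + α))) := by
      funext w
      rw [hBdef, ENNReal.ofReal_mul hC20.le]
    have hψm : Measurable fun w : EuclideanSpace ℝ (Fin n) =>
        ENNReal.ofReal (δ ^ (-(n : ℝ)) * (1 + ‖x - w‖ / δ) ^ (-((n : ℝ) + α))) :=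
      ENNReal.measurable_ofReal.comp hψcont.measurable
    rw [hre, lintegral_const_mul _ hψm]
    congr 1
    rw [← ofReal_integral_eq_lintegral_ofReal hψi hψnn]
    congr 1
    have hsub : ∫ w, δ ^ (-(n : ℝ)) * (1 + ‖x - w‖ / δ) ^ (-((n : ℝ) + α)) ∂volume =
        δ ^ (-(n : ℝ)) * ∫ w, (1 + ‖x - w‖ / δ) ^ (-((n : ℝ) + α)) ∂volume :=
      integral_const_mul _ _
    have htrans : ∫ w, (1 + ‖x - w‖ / δ) ^ (-((n : ℝ) + α)) ∂(volume : Measure (EuclideanSpace ℝ (Fin n))) =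
        ∫ v, (1 + ‖v‖ / δ) ^ (-((n : ℝ) + α)) ∂(volume : Measure (EuclideanSpace ℝ (Fin n))) :=
      integral_sub_left_eq_self (fun v => (1 + ‖v‖ / δ) ^ (-((n : ℝ) + α))) volume x
    have hscale : ∫ v, (1 + ‖v‖ / δ) ^ (-((n : ℝ) + α)) ∂(volume : Measure (EuclideanSpace ℝ (Fin n))) =
        (δ ^ n) * K := by
      have h1 : (fun v : EuclideanSpace ℝ (Fin n) => (1 + ‖v‖ / δ) ^ (-((n : ℝ) + α))) =
          fun v => (1 + ‖δ⁻¹ • v‖) ^ (-((n : ℝ) + α)) := by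
        funext v
        rw [norm_smul, norm_inv, Real.norm_eq_abs, abs_of_pos hδ0, div_eq_inv_mul]
      rw [h1]
      have h2 := Measure.integral_comp_inv_smul (volume : Measure (EuclideanSpace ℝ (Fin n)))
        (fun v => (1 + ‖v‖) ^ (-((n : ℝ) + α))) δ
      rw [hfr, abs_of_pos (pow_pos hδ0 n), smul_eq_mul] at h2
      exact h2
    rw [hsub, htrans, hscale, ← mul_assoc]
    have hpow : δ ^ (-(n : ℝ)) * δ ^ n = 1 := by
      rw [← Real.rpow_natCast δ n, ← Real.rpow_add hδ0]
      simp
    rw [hpow, one_mul]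
  -- assemble the chain
  have hL : ENNReal.ofReal |∫ y, F y| ≤ ∫⁻ y, g y ∂volume := by
    rw [← Real.enorm_eq_ofReal_abs]
    exact enorm_integral_le_lintegral_enorm _
  have hchain : ∫⁻ y, g y ∂volume ≤
      Vb⁻¹ * (ENNReal.ofReal C2 * ENNReal.ofReal K * (M * Vb ^ (1 - 1 / r))) := by
    have h1 : ∫⁻ y, g y ∂volume = ∫⁻ y, g₀ y ∂volume := lintegral_congr_ae hgg₀
    have h2 : Vb * ∫⁻ y, g₀ y ∂volume ≤
        ENNReal.ofReal C2 * ENNReal.ofReal K * (M * Vb ^ (1 - 1 / r)) := by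
      rw [← hswap]
      have h3 : ∀ w, ∫⁻ y in ball w ρ, g₀ y ∂volume = ∫⁻ y in ball w ρ, g y ∂volume :=
        fun w => lintegral_congr_ae (ae_restrict_of_ae hgg₀.symm)
      calc ∫⁻ w, ∫⁻ y in ball w ρ, g₀ y ∂volume ∂volume
          = ∫⁻ w, ∫⁻ y in ball w ρ, g y ∂volume ∂volume := lintegral_congr h3
        _ ≤ ∫⁻ w, ENNReal.ofReal (B w) * (M * Vb ^ (1 - 1 / r)) ∂volume :=
            lintegral_mono hinner
        _ = (∫⁻ w, ENNReal.ofReal (B w) ∂volume) * (M * Vb ^ (1 - 1 / r)) :=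
            lintegral_mul_const _
              (show Measurable fun w : EuclideanSpace ℝ (Fin n) => ENNReal.ofReal (B w) from
                ENNReal.measurable_ofReal.comp hBcont.measurable)
        _ = ENNReal.ofReal C2 * ENNReal.ofReal K * (M * Vb ^ (1 - 1 / r)) := by rw [houter]
    calc ∫⁻ y, g y ∂volume = Vb⁻¹ * (Vb * ∫⁻ y, g₀ y ∂volume) := by
          rw [← mul_assoc, ENNReal.inv_mul_cancel hVb0 hVbtop, one_mul, h1]
      _ ≤ Vb⁻¹ * (ENNReal.ofReal C2 * ENNReal.ofReal K * (M * Vb ^ (1 - 1 / r))) :=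
          mul_le_mul_right h2 _
  -- simplify the constant
  have hVbfactor : Vb⁻¹ * Vb ^ (1 - 1 / r) = ENNReal.ofReal ((ρ ^ n * v₁) ^ (-(1 / r))) := by
    have h1 : Vb⁻¹ = Vb ^ (-1 : ℝ) := by rw [ENNReal.rpow_neg_one]
    rw [h1, ← ENNReal.rpow_add _ _ hVb0 hVbtop]
    have h2 : (-1 : ℝ) + (1 - 1 / r) = -(1 / r) := by ring
    rw [h2, hVbeq, ← ENNReal.ofReal_rpow_of_pos (by positivity)]
  have hrhofactor : (ρ ^ n : ℝ) ^ (-(1 / r)) = max 1 (t ^ (-(n : ℝ) / (2 * s * r))) := by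
    have hρr : (ρ ^ n : ℝ) ^ (-(1 / r)) = ρ ^ ((n : ℝ) * (-(1 / r))) := by
      rw [Real.rpow_mul hρ0.le, Real.rpow_natCast]
    rcases le_or_gt 1 δ with h1δ | h1δ
    · have hρeq : ρ = 1 := min_eq_right h1δ
      have ht1 : 1 ≤ t := by
        by_contra h
        push_neg at h
        have : δ < 1 := by
          rw [hδdef]
          exact Real.rpow_lt_one ht.le h (by positivity)
        linarith
      have hle : t ^ (-(n : ℝ) / (2 * s * r)) ≤ 1 :=
        Real.rpow_le_one_of_one_le_of_nonpos ht1
          (by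
            apply div_nonpos_of_nonpos_of_nonneg
            · simp
            · positivity)
      rw [hρr, hρeq, Real.one_rpow, max_eq_left hle]
    · have hρeq : ρ = δ := min_eq_left h1δ.le
      have ht1 : t ≤ 1 := by
        by_contra h
        push_neg at h
        have h2 : (1:ℝ) ≤ δ := by
          rw [hδdef]
          exact Real.one_le_rpow h.le (by positivity)
        linarith
      have heq : δ ^ ((n : ℝ) * (-(1 / r))) = t ^ (-(n : ℝ) / (2 * s * r)) := by
        rw [hδdef, ← Real.rpow_mul ht.le]
        congr 1
        field_simp
      have hge : 1 ≤ t ^ (-(n : ℝ) / (2 * s * r)) := by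
        apply Real.one_le_rpow_of_pos_of_le_one_of_nonpos ht ht1
        apply div_nonpos_of_nonpos_of_nonneg
        · simp
        · positivity
      rw [hρr, hρeq, heq, max_eq_right hge]
  have hv1factor : v₁ ^ (-(1 / r)) ≤ max 1 v₁⁻¹ := by
    rcases le_or_gt 1 v₁ with h | h
    · refine le_trans (Real.rpow_le_one_of_one_le_of_nonpos h ?_) (le_max_left _ _)
      have h0 : (0:ℝ) ≤ 1 / r := by positivity
      linarith
    · refine le_trans ?_ (le_max_right _ _)
      have h1 : v₁ ^ (-(1 / r)) ≤ v₁ ^ (-1 : ℝ) := by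
        apply Real.rpow_le_rpow_of_exponent_ge hv₁0 h.le
        have : 1 / r ≤ 1 := by
          rw [div_le_one hr0]
          exact hr
        linarith
      rwa [Real.rpow_neg_one] at h1
  -- final comparison of constants
  have hconst : ENNReal.ofReal C2 * ENNReal.ofReal K *
      ENNReal.ofReal ((ρ ^ n * v₁) ^ (-(1 / r))) ≤
      ENNReal.ofReal (max 1 (C2 * K * max 1 v₁⁻¹) * max 1 (t ^ (-(n : ℝ) / (2 * s * r)))) := by
    rw [← ENNReal.ofReal_mul hC20.le, ← ENNReal.ofReal_mul (by positivity)]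
    apply ENNReal.ofReal_le_ofReal
    have hsplit : ((ρ ^ n * v₁) : ℝ) ^ (-(1 / r)) =
        (ρ ^ n : ℝ) ^ (-(1 / r)) * v₁ ^ (-(1 / r)) :=
      Real.mul_rpow (by positivity) hv₁0.le
    rw [hsplit, hrhofactor]
    have hX1 : (1:ℝ) ≤ max 1 (t ^ (-(n : ℝ) / (2 * s * r))) := le_max_left _ _
    have hY : v₁ ^ (-(1 / r)) ≤ max 1 v₁⁻¹ := hv1factor
    have hCK : (0:ℝ) ≤ C2 * K := by positivity
    calc C2 * K * (max 1 (t ^ (-(n : ℝ) / (2 * s * r))) * v₁ ^ (-(1 / r)))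
        = C2 * K * v₁ ^ (-(1 / r)) * max 1 (t ^ (-(n : ℝ) / (2 * s * r))) := by ring
      _ ≤ C2 * K * max 1 v₁⁻¹ * max 1 (t ^ (-(n : ℝ) / (2 * s * r))) := by
          apply mul_le_mul_of_nonneg_right _ (by linarith)
          exact mul_le_mul_of_nonneg_left hY hCK
      _ ≤ max 1 (C2 * K * max 1 v₁⁻¹) * max 1 (t ^ (-(n : ℝ) / (2 * s * r))) := by
          apply mul_le_mul_of_nonneg_right (le_max_right _ _) (by linarith)
  -- put everything together
  refine hL.trans (hchain.trans ?_)
  have hrearr : Vb⁻¹ * (ENNReal.ofReal C2 * ENNReal.ofReal K * (M * Vb ^ (1 - 1 / r))) =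
      ENNReal.ofReal C2 * ENNReal.ofReal K *
        ENNReal.ofReal ((ρ ^ n * v₁) ^ (-(1 / r))) * M := by
    rw [← hVbfactor]
    ring
  rw [hrearr]
  exact mul_le_mul_left hconst M
end
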